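/- arXiv:1906.00049 — 3 statements merged into one kernel-verified Lean document; each statement's English description precedes it below -/
import Mathlib

section
/- Let φ : ℝⁿ → ℝ be convex, C ⊆ ℝⁿ a convex set, ψ differentiable and convex, ρ > 0, and let x⁺ be a minimizer over C of u ↦ φ(u) + (1/ρ) B_ψ(u,x). Then for every z ∈ C, φ(x⁺) − φ(z) ≤ (1/ρ)(B_ψ(z,x) − B_ψ(z,x⁺) − B_ψ(x⁺,x)). -/
open RealInnerProductSpace

/-- One-iteration bound for the proximal method with Bregman distance. -/
theorem one_step_prox {n : ℕ}
    (φ ψ : EuclideanSpace ℝ (Fin n) → ℝ)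
    (Dψ : EuclideanSpace ℝ (Fin n) → EuclideanSpace ℝ (Fin n))
    (hψdiff : ∀ x, HasGradientAt ψ (Dψ x) x)
    (hψconv : ConvexOn ℝ Set.univ ψ)
    (hφconv : ConvexOn ℝ Set.univ φ)
    (C : Set (EuclideanSpace ℝ (Fin n))) (hC : Convex ℝ C)
    (B : EuclideanSpace ℝ (Fin n) → EuclideanSpace ℝ (Fin n) → ℝ)
    (hB : ∀ a b, B a b = ψ a - ψ b - ⟪a - b, Dψ b⟫)
    (ρ : ℝ) (hρ : 0 < ρ)
    (x xp : EuclideanSpace ℝ (Fin n)) (hxp : xp ∈ C)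
    (hmin : ∀ u ∈ C, φ xp + (1 / ρ) * B xp x ≤ φ u + (1 / ρ) * B u x) :
    ∀ z ∈ C, φ xp - φ z ≤ (1 / ρ) * (B z x - B z xp - B xp x) := by
  intro z hz
  set v : EuclideanSpace ℝ (Fin n) := z - xp with hv
  -- rewrite RHS in terms of inner products
  have hRHS : (1 / ρ) * (B z x - B z xp - B xp x)
      = (1 / ρ) * (⟪Dψ xp, v⟫ - ⟪v, Dψ x⟫) := by
    simp only [hB, hv, inner_sub_left, inner_sub_right, real_inner_comm (Dψ xp)]
    ring
  rw [hRHS]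
  -- directional derivative of ψ at xp in direction v
  have hline : HasDerivAt (fun t : ℝ => xp + t • v) v 0 := by
    simpa using ((hasDerivAt_id (0 : ℝ)).smul_const v).const_add xp
  have hg : HasDerivAt (fun t : ℝ => ψ (xp + t • v)) ⟪Dψ xp, v⟫ 0 := by
    have hfd := (hψdiff xp).hasFDerivAt
    rw [show xp = xp + (0 : ℝ) • v by simp] at hfd
    have h := hfd.comp_hasDerivAt 0 hline
    simp at h
    exact h
  have htend : Filter.Tendsto (fun t : ℝ => (ψ (xp + t • v) - ψ xp) / t)
      (nhdsWithin 0 (Set.Ioi 0)) (nhds ⟪Dψ xp, v⟫) := by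
    have h1 := hasDerivAt_iff_tendsto_slope.mp hg
    have h2 := h1.mono_left (nhdsWithin_mono (0 : ℝ) (fun t ht => by
      simp only [Set.mem_compl_iff, Set.mem_singleton_iff]
      exact ne_of_gt ht))
    refine h2.congr' ?_
    filter_upwards [self_mem_nhdsWithin] with t ht
    simp [slope_def_field, div_eq_inv_mul]
  have htend2 : Filter.Tendsto
      (fun t : ℝ => (1 / ρ) * ((ψ (xp + t • v) - ψ xp) / t - ⟪v, Dψ x⟫))
      (nhdsWithin 0 (Set.Ioi 0)) (nhds ((1 / ρ) * (⟪Dψ xp, v⟫ - ⟪v, Dψ x⟫))) :=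
    ((htend.sub tendsto_const_nhds).const_mul _)
  refine ge_of_tendsto htend2 ?_
  have hmem : Set.Ioo (0 : ℝ) 1 ∈ nhdsWithin (0 : ℝ) (Set.Ioi 0) := by
    apply mem_nhdsWithin.mpr
    exact ⟨Set.Iio 1, isOpen_Iio, by norm_num, fun t ht => ⟨ht.2, ht.1⟩⟩
  filter_upwards [hmem] with t ht
  obtain ⟨ht0, ht1⟩ := ht
  -- the point on the segment
  have hcomb : (1 - t) • xp + t • z = xp + t • v := by
    rw [hv, smul_sub, sub_smul, one_smul]
    abel
  have hmemC : xp + t • v ∈ C := by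
    rw [← hcomb]
    exact hC hxp hz (by linarith) (le_of_lt ht0) (by ring)
  have hφ : φ (xp + t • v) ≤ (1 - t) * φ xp + t * φ z := by
    rw [← hcomb]
    exact hφconv.2 (Set.mem_univ xp) (Set.mem_univ z) (by linarith) (le_of_lt ht0) (by ring)
  have hkey := hmin _ hmemC
  have hBdiff : B (xp + t • v) x - B xp x = ψ (xp + t • v) - ψ xp - t * ⟪v, Dψ x⟫ := by
    simp only [hB]
    have : xp + t • v - x - (xp - x) = t • v := by abel
    rw [show (⟪xp + t • v - x, Dψ x⟫ : ℝ) = ⟪xp - x, Dψ x⟫ + t * ⟪v, Dψ x⟫ by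
      rw [show xp + t • v - x = (xp - x) + t • v by abel, inner_add_left,
        real_inner_smul_left]]
    ring
  -- from optimality and convexity of φ:
  have hstep : t * (φ xp - φ z) ≤ (1 / ρ) * (ψ (xp + t • v) - ψ xp - t * ⟪v, Dψ x⟫) := by
    rw [← hBdiff]
    nlinarith [hkey, hφ]
  have hρinv : (0 : ℝ) < 1 / ρ := by positivity
  rw [show (1 / ρ) * ((ψ (xp + t • v) - ψ xp) / t - ⟪v, Dψ x⟫)
      = ((1 / ρ) * (ψ (xp + t • v) - ψ xp - t * ⟪v, Dψ x⟫)) / t by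
        field_simp, le_div_iff₀ ht0]
  nlinarith [hstep]
end

section
/- Let f, θ : ℝⁿ → ℝ be convex, ψ a σ_ψ-strongly convex differentiable function, C ⊆ ℝⁿ convex, ρ > 0, x ∈ C, and x⁺ the minimizer over C of u ↦ ⟨f'(x), u⟩ + θ(u) + (1/ρ) B_ψ(u,x), where f'(x) is a subgradient of f at x. Then for every z ∈ C, f(x) − f(z) + θ(x⁺) − θ(z) ≤ (1/ρ)(B_ψ(z,x) − B_ψ(z,x⁺)) + (2ρ/σ_ψ)‖f'(x)‖²_*, where ‖·‖_* is the dual norm. -/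
open RealInnerProductSpace

open Filter Topology in
/-- Directional slope of a function with a gradient tends to the inner product
with the gradient. -/
lemma grad_dir_tendsto {n : ℕ} {φ : EuclideanSpace ℝ (Fin n) → ℝ}
    {G p : EuclideanSpace ℝ (Fin n)} (h : HasGradientAt φ G p)
    (v : EuclideanSpace ℝ (Fin n)) :
    Filter.Tendsto (fun t : ℝ => (φ (p + t • v) - φ p) / t) (𝓝[>] (0:ℝ))
      (𝓝 ⟪G, v⟫) := by
  have hline : HasDerivAt (fun t : ℝ => p + t • v) v 0 := by
    simpa using ((hasDerivAt_id (0:ℝ)).smul_const v).const_add p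
  have hφ : HasDerivAt (fun t : ℝ => φ (p + t • v)) ⟪G, v⟫ 0 := by
    have := h.hasFDerivAt.comp_hasDerivAt_of_eq 0 hline (by simp)
    exact this
  have := hφ.tendsto_slope_zero_right
  simpa [div_eq_inv_mul] using this

/-- One-iteration bound for the proximal gradient (mirror-descent) method. -/
theorem one_step_prox_gradient {n : ℕ}
    (f θ ψ : EuclideanSpace ℝ (Fin n) → ℝ)
    (Dψ : EuclideanSpace ℝ (Fin n) → EuclideanSpace ℝ (Fin n))
    (hψdiff : ∀ x, HasGradientAt ψ (Dψ x) x)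
    (σ : ℝ) (hσ : 0 < σ)
    (hψstrong : StrongConvexOn Set.univ σ ψ)
    (hfconv : ConvexOn ℝ Set.univ f)
    (hθconv : ConvexOn ℝ Set.univ θ)
    (C : Set (EuclideanSpace ℝ (Fin n))) (hC : Convex ℝ C)
    (B : EuclideanSpace ℝ (Fin n) → EuclideanSpace ℝ (Fin n) → ℝ)
    (hB : ∀ a b, B a b = ψ a - ψ b - ⟪a - b, Dψ b⟫)
    (ρ : ℝ) (hρ : 0 < ρ)
    (x xp : EuclideanSpace ℝ (Fin n)) (hx : x ∈ C) (hxp : xp ∈ C)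
    (g : EuclideanSpace ℝ (Fin n))
    (hsub : ∀ z, f x + ⟪g, z - x⟫ ≤ f z)  -- g is a subgradient of f at x
    (hmin : ∀ u ∈ C,
      ⟪g, xp⟫ + θ xp + (1 / ρ) * B xp x ≤ ⟪g, u⟫ + θ u + (1 / ρ) * B u x) :
    ∀ z ∈ C, f x - f z + θ xp - θ z ≤
      (1 / ρ) * (B z x - B z xp) + (2 * ρ / σ) * ‖g‖ ^ 2 := by
  intro z hz
  have hIoc : Set.Ioc (0:ℝ) 1 ∈ nhdsWithin (0:ℝ) (Set.Ioi 0) :=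
    Ioc_mem_nhdsGT_of_mem ⟨le_refl 0, one_pos⟩
  -- Part 1 : strong convexity lower bound on B xp x
  have hBxp : σ / 2 * ‖xp - x‖ ^ 2 ≤ B xp x := by
    set w := xp - x with hw
    have key : ∀ t ∈ Set.Ioc (0:ℝ) 1,
        (ψ (x + t • w) - ψ x) / t + (1 - t) * (σ / 2 * ‖w‖ ^ 2) ≤ ψ xp - ψ x := by
      intro t ht
      have h2 := hψstrong.2 (Set.mem_univ x) (Set.mem_univ xp)
        (show (0:ℝ) ≤ 1 - t by linarith [ht.2]) (le_of_lt ht.1)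
        (show (1 - t) + t = 1 by ring)
      have hpt : (1 - t) • x + t • xp = x + t • w := by
        rw [hw]; module
      have hnrm : ‖x - xp‖ = ‖w‖ := by rw [hw, norm_sub_rev]
      rw [hpt, hnrm, smul_eq_mul, smul_eq_mul] at h2
      rw [div_add' _ _ _ (ne_of_gt ht.1), div_le_iff₀ ht.1]
      nlinarith [ht.1]
    have h2nd : Filter.Tendsto (fun t : ℝ => (1 - t) * (σ / 2 * ‖w‖ ^ 2))
        (nhdsWithin (0:ℝ) (Set.Ioi 0)) (nhds (σ / 2 * ‖w‖ ^ 2)) := by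
      have hc : Continuous fun t : ℝ => (1 - t) * (σ / 2 * ‖w‖ ^ 2) := by continuity
      have := hc.tendsto 0
      simp only [sub_zero, one_mul] at this
      exact this.mono_left nhdsWithin_le_nhds
    have hlim := (grad_dir_tendsto (hψdiff x) w).add h2nd
    have hle : ⟪Dψ x, w⟫ + σ / 2 * ‖w‖ ^ 2 ≤ ψ xp - ψ x :=
      le_of_tendsto hlim (Filter.eventually_of_mem hIoc key)
    have hBeq : B xp x = ψ xp - ψ x - ⟪Dψ x, w⟫ := by
      rw [hB, hw, real_inner_comm]
    rw [hBeq]; linarith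
  -- Part 2 : variational inequality from minimality
  have hVI : (0:ℝ) ≤ ⟪g, z - xp⟫ + θ z - θ xp +
      (1 / ρ) * (⟪Dψ xp, z - xp⟫ - ⟪z - xp, Dψ x⟫) := by
    set v := z - xp with hv
    have key2 : ∀ t ∈ Set.Ioc (0:ℝ) 1,
        (0:ℝ) ≤ ⟪g, v⟫ + θ z - θ xp +
          (1 / ρ) * ((ψ (xp + t • v) - ψ xp) / t - ⟪v, Dψ x⟫) := by
      intro t ht
      set u := xp + t • v with hu
      have huC : u ∈ C := by
        have : (1 - t) • xp + t • z = u := by rw [hu, hv]; module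
        rw [← this]
        exact hC hxp hz (by linarith [ht.2]) (le_of_lt ht.1) (by ring)
      have hθ : θ u ≤ (1 - t) * θ xp + t * θ z := by
        have h := hθconv.2 (Set.mem_univ xp) (Set.mem_univ z)
          (show (0:ℝ) ≤ 1 - t by linarith [ht.2]) (le_of_lt ht.1)
          (show (1 - t) + t = 1 by ring)
        have : (1 - t) • xp + t • z = u := by rw [hu, hv]; module
        rw [this, smul_eq_mul, smul_eq_mul] at h
        exact h
      have hmu := hmin u huC
      have hexp1 : ⟪g, u⟫ = ⟪g, xp⟫ + t * ⟪g, v⟫ := by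
        rw [hu, inner_add_right, real_inner_smul_right]
      have hexp2 : ⟪u - x, Dψ x⟫ = ⟪xp - x, Dψ x⟫ + t * ⟪v, Dψ x⟫ := by
        have : u - x = (xp - x) + t • v := by rw [hu]; module
        rw [this, inner_add_left, real_inner_smul_left]
      have hBdiff : (1 / ρ) * B xp x - (1 / ρ) * B u x =
          (1 / ρ) * (ψ xp - ψ u + t * ⟪v, Dψ x⟫) := by
        rw [hB, hB, hexp2]; ring
      have h1 : (1 / ρ) * (ψ xp - ψ u + t * ⟪v, Dψ x⟫) ≤
          t * ⟪g, v⟫ + t * (θ z - θ xp) := by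
        rw [← hBdiff]; linarith [hmu, hθ, hexp1]
      have h2 : (1 / ρ) * (ψ xp - ψ u + t * ⟪v, Dψ x⟫) / t ≤
          ⟪g, v⟫ + θ z - θ xp := by
        rw [div_le_iff₀ ht.1]
        have hrg : (⟪g, v⟫ + θ z - θ xp) * t = t * ⟪g, v⟫ + t * (θ z - θ xp) := by
          ring
        rw [hrg]; exact h1
      have h3 : (1 / ρ) * ((ψ u - ψ xp) / t - ⟪v, Dψ x⟫) =
          -((1 / ρ) * (ψ xp - ψ u + t * ⟪v, Dψ x⟫) / t) := by
        field_simp [ne_of_gt hρ, ne_of_gt ht.1]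
        ring
      rw [h3]
      linarith [h2]
    have hlim := ((grad_dir_tendsto (hψdiff xp) v).sub_const ⟪v, Dψ x⟫).const_mul
      (1 / ρ) |>.const_add (⟪g, v⟫ + θ z - θ xp)
    exact ge_of_tendsto hlim (Filter.eventually_of_mem hIoc key2)
  -- three point identity
  have h3pt : B z x - B z xp - B xp x = ⟪Dψ xp, z - xp⟫ - ⟪z - xp, Dψ x⟫ := by
    simp only [hB, inner_sub_left, inner_sub_right]
    rw [real_inner_comm (Dψ xp) z, real_inner_comm (Dψ xp) xp]
    ring
  -- subgradient inequality
  have hsubz := hsub z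
  have hinz : ⟪g, z - x⟫ = ⟪g, z⟫ - ⟪g, x⟫ := inner_sub_right g z x
  have hinv : ⟪g, z - xp⟫ = ⟪g, z⟫ - ⟪g, xp⟫ := inner_sub_right g z xp
  -- Fenchel-type bound
  have hv : ⟪g, x⟫ - ⟪g, xp⟫ - (1 / ρ) * B xp x ≤ 2 * ρ / σ * ‖g‖ ^ 2 := by
    set r := ‖x - xp‖ with hr
    have hir : ⟪g, x⟫ - ⟪g, xp⟫ ≤ ‖g‖ * r := by
      have := real_inner_le_norm g (x - xp)
      rw [inner_sub_right] at this
      exact this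
    have hnrm : ‖xp - x‖ = r := by rw [hr, norm_sub_rev]
    have hBge : σ / 2 * r ^ 2 ≤ B xp x := by rw [← hnrm]; exact hBxp
    have hmul : (1 / ρ) * (σ / 2 * r ^ 2) ≤ (1 / ρ) * B xp x :=
      mul_le_mul_of_nonneg_left hBge (by positivity)
    have hfin : ‖g‖ * r - (1 / ρ) * (σ / 2 * r ^ 2) ≤ 2 * ρ / σ * ‖g‖ ^ 2 := by
      rw [← sub_nonneg]
      have heq : 2 * ρ / σ * ‖g‖ ^ 2 - (‖g‖ * r - (1 / ρ) * (σ / 2 * r ^ 2)) =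
          ((σ * r - ρ * ‖g‖) ^ 2 + 3 * ρ ^ 2 * ‖g‖ ^ 2) / (2 * ρ * σ) := by
        field_simp
        ring
      rw [heq]; positivity
    linarith
  have h3pt' : (1 / ρ) * (⟪Dψ xp, z - xp⟫ - ⟪z - xp, Dψ x⟫) =
      (1 / ρ) * (B z x - B z xp) - (1 / ρ) * B xp x := by
    rw [← h3pt]; ring
  linarith [hVI, h3pt', hsubz, hv, hinz, hinv]
end

section
/- For ε ∈ [0,1), ρ_t = t^{−ε}, and S = {t, t+1, …, t + ⌈t^ε⌉} for any natural number t ≥ 1, the partial sum satisfies log 2 ≤ Σ_{i ∈ S} ρ_i ≤ 3. -/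
open Finset

private lemma key_lower (δ a b : ℝ) (hδ0 : 0 < δ) (hδ1 : δ ≤ 1) (ha : 1 ≤ a)
    (hb : a + a ^ (1 - δ) ≤ b) : Real.log 2 ≤ (b ^ δ - a ^ δ) / δ := by
  have ha0 : (0:ℝ) < a := by linarith
  set v := a ^ (-δ) with hv
  have hv0 : 0 < v := Real.rpow_pos_of_pos ha0 _
  have hv1 : v ≤ 1 := Real.rpow_le_one_of_one_le_of_nonpos ha (by linarith)
  have hva : a ^ δ * v = 1 := by
    rw [hv, ← Real.rpow_add ha0]; simp
  have hb0 : 0 < b := by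
    have := Real.rpow_pos_of_pos ha0 (1 - δ); linarith
  -- b/a ≥ 1 + v
  have hdiv : 1 + v ≤ b / a := by
    rw [le_div_iff₀ ha0]
    have h1 : a ^ (1 - δ) = a * v := by
      have h := Real.rpow_add ha0 1 (-δ)
      rw [Real.rpow_one] at h
      rw [hv, show (1:ℝ) - δ = 1 + -δ by ring, h]
    nlinarith
  -- H1 : v * log 2 ≤ log (1 + v), via convexity of exp
  have H1 : v * Real.log 2 ≤ Real.log (1 + v) := by
    rw [Real.le_log_iff_exp_le (by linarith)]
    have hc := convexOn_exp.2 (Set.mem_univ (0:ℝ)) (Set.mem_univ (Real.log 2))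
      (by linarith : (0:ℝ) ≤ 1 - v) hv0.le (by ring)
    simp only [smul_eq_mul, mul_zero, zero_add, Real.exp_zero,
      Real.exp_log (by norm_num : (0:ℝ) < 2)] at hc
    linarith
  -- H2 : log (1+v) ≤ log (b/a)
  have H2 : Real.log (1 + v) ≤ Real.log (b / a) :=
    Real.log_le_log (by linarith) hdiv
  -- H3 : δ * log (b/a) ≤ (b/a)^δ - 1
  have hba0 : 0 < b / a := div_pos hb0 ha0
  have H3 : δ * Real.log (b / a) ≤ (b / a) ^ δ - 1 := by
    have h := Real.add_one_le_exp (δ * Real.log (b / a))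
    rw [mul_comm, ← Real.rpow_def_of_pos hba0] at h
    linarith
  have hbv : (b / a) ^ δ = b ^ δ * v := by
    rw [Real.div_rpow hb0.le ha0.le, hv, Real.rpow_neg ha0.le, div_eq_mul_inv]
  rw [le_div_iff₀ hδ0]
  have hvd : v * (δ * Real.log 2) ≤ v * (b ^ δ) - 1 := by
    nlinarith
  nlinarith

/-- Bounded subsequences: for ρ_i = i^{-ε} and S = {t, …, t + ⌈t^ε⌉},
    log 2 ≤ Σ_{i ∈ S} ρ_i ≤ 3. -/
theorem sum_window_rho_bounds (ε : ℝ) (hε0 : 0 ≤ ε) (hε1 : ε < 1)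
    (t : ℕ) (ht : 1 ≤ t) :
    Real.log 2 ≤ ∑ i ∈ Finset.Icc t (t + ⌈(t : ℝ) ^ ε⌉₊), (i : ℝ) ^ (-ε) ∧
    ∑ i ∈ Finset.Icc t (t + ⌈(t : ℝ) ^ ε⌉₊), (i : ℝ) ^ (-ε) ≤ 3 := by
  set N := ⌈(t : ℝ) ^ ε⌉₊ with hN
  have ht1 : (1:ℝ) ≤ (t:ℝ) := by exact_mod_cast ht
  have htpos : (0:ℝ) < t := by linarith
  have hteps : (0:ℝ) < (t:ℝ) ^ ε := Real.rpow_pos_of_pos htpos ε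
  have hNge : (t:ℝ) ^ ε ≤ N := Nat.le_ceil _
  have hNle : (N:ℝ) ≤ (t:ℝ) ^ ε + 1 := by
    have := Nat.ceil_lt_add_one hteps.le
    exact this.le
  have hεneg : -ε ≤ 0 := neg_nonpos.mpr hε0
  -- reindex : sum over Icc = sum over range
  have hreindex : ∑ i ∈ Finset.Icc t (t + N), (i : ℝ) ^ (-ε)
      = ∑ i ∈ Finset.range (N + 1), ((t : ℝ) + i) ^ (-ε) := by
    rw [show Finset.Icc t (t + N) = Finset.Ico t (t + N + 1) by
      rw [Finset.Ico_add_one_right_eq_Icc], Finset.sum_Ico_eq_sum_range,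
      show t + N + 1 - t = N + 1 by omega]
    refine Finset.sum_congr rfl fun i _ => ?_
    push_cast; ring_nf
  constructor
  · -- lower bound
    have hant : AntitoneOn (fun x : ℝ => x ^ (-ε))
        (Set.Icc (t:ℝ) ((t:ℝ) + (N + 1 : ℕ))) := by
      intro x hx y hy hxy
      exact Real.rpow_le_rpow_of_nonpos (lt_of_lt_of_le htpos hx.1) hxy hεneg
    have hint := hant.integral_le_sum
    have hval : ∫ x in (t:ℝ)..((t:ℝ) + (N + 1 : ℕ)), x ^ (-ε)
        = (((t:ℝ) + (N + 1 : ℕ)) ^ (-ε + 1) - (t:ℝ) ^ (-ε + 1)) / (-ε + 1) := by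
      apply integral_rpow
      left; linarith
    have hkey := key_lower (1 - ε) (t:ℝ) ((t:ℝ) + (N + 1 : ℕ))
      (by linarith) (by linarith) ht1 (by push_cast; ring_nf; nlinarith)
    rw [hval] at hint
    rw [hreindex]
    have hcast : ∑ i ∈ Finset.range (N + 1), ((t : ℝ) + (i:ℕ)) ^ (-ε)
        = ∑ i ∈ Finset.range (N + 1), (fun x : ℝ => x ^ (-ε)) ((t:ℝ) + (i:ℕ)) := rfl
    calc Real.log 2
        ≤ ((((t:ℝ) + (N + 1 : ℕ)) ^ (1 - ε) - (t:ℝ) ^ (1 - ε)) / (1 - ε)) := hkey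
      _ = (((t:ℝ) + (N + 1 : ℕ)) ^ (-ε + 1) - (t:ℝ) ^ (-ε + 1)) / (-ε + 1) := by
          ring_nf
      _ ≤ ∑ i ∈ Finset.range (N + 1), ((t : ℝ) + (i:ℕ)) ^ (-ε) := hint
  · -- upper bound
    have hle1 : (t:ℝ) ^ (-ε) ≤ 1 :=
      Real.rpow_le_one_of_one_le_of_nonpos ht1 hεneg
    have hinv : (t:ℝ) ^ ε * (t:ℝ) ^ (-ε) = 1 := by
      rw [← Real.rpow_add htpos]; simp
    have hpos : 0 < (t:ℝ) ^ (-ε) := Real.rpow_pos_of_pos htpos _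
    have h1 : ∑ i ∈ Finset.Icc t (t + N), (i : ℝ) ^ (-ε)
        ≤ ∑ i ∈ Finset.Icc t (t + N), (t : ℝ) ^ (-ε) := by
      refine Finset.sum_le_sum fun i hi => ?_
      have : (t:ℝ) ≤ i := by exact_mod_cast (Finset.mem_Icc.mp hi).1
      exact Real.rpow_le_rpow_of_nonpos htpos this hεneg
    rw [Finset.sum_const, Nat.card_Icc] at h1
    have hcard : t + N + 1 - t = N + 1 := by omega
    rw [hcard, nsmul_eq_mul] at h1
    have h2 : ((N:ℝ) + 1) * (t:ℝ) ^ (-ε) ≤ 3 := by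
      push_cast
      nlinarith
    push_cast at h1
    linarith
end
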